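/- Let E ⊂ ℂ be a compact set, s > 0, and let μ be a positive Borel measure supported on E satisfying μ(B(z,r)) ≤ r^s for all z ∈ ℂ and r > 0. Then for every z ∈ ℂ, the logarithmic potential satisfies U_μ(z) = ∫ log(1/|z−w|) dμ(w) ≤ (μ(E)/s)·(1 + log(1/μ(E))), provided μ(E) ≤ 1. -/

import Mathlib

open MeasureTheory
open scoped ENNReal NNReal

lemma exp_lintegral_Ioi {s : ℝ} (hs : 0 < s) (τ : ℝ) :
    ∫⁻ t in Set.Ioi τ, ENNReal.ofReal (Real.exp (-s * t)) =
      ENNReal.ofReal (Real.exp (-s * τ) / s) := by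
  rw [← ofReal_integral_eq_lintegral_ofReal (exp_neg_integrableOn_Ioi τ hs)
    (Filter.Eventually.of_forall fun t => (Real.exp_pos _).le)]
  congr 1
  have hderiv : ∀ x ∈ Set.Ici τ, HasDerivAt (fun x => -Real.exp (-s * x) / s)
      (Real.exp (-s * x)) x := by
    intro x _
    have h1 : HasDerivAt (fun x : ℝ => -s * x) (-s) x := by
      simpa using (hasDerivAt_id x).const_mul (-s)
    have h2 := h1.exp.neg.div_const s
    refine h2.congr_deriv ?_
    field_simp [hs.ne']
  have htend : Filter.Tendsto (fun x => -Real.exp (-s * x) / s) Filter.atTop (nhds (-0/s)) := by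
    refine Filter.Tendsto.div_const (Filter.Tendsto.neg ?_) _
    exact Real.tendsto_exp_atBot.comp (Filter.tendsto_id.const_mul_atTop_of_neg (by linarith))
  rw [MeasureTheory.integral_Ioi_of_hasDerivAt_of_tendsto' hderiv
    (exp_neg_integrableOn_Ioi τ hs) htend]
  ring

/-- Estimate of the logarithmic potential of a measure with power growth
`μ(B(z,r)) ≤ r^s` and total mass `μ(E) ≤ 1`:
`U_μ(z) ≤ (μ(E)/s)·(1 + log(1/μ(E)))`. -/
theorem stmt1 (E : Set ℂ) (hE : IsCompact E) (s : ℝ) (hs : 0 < s)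
    (μ : Measure ℂ) (hsupp : μ Eᶜ = 0)
    (hgrowth : ∀ (z : ℂ) (r : ℝ), 0 < r → μ (Metric.closedBall z r) ≤ ENNReal.ofReal (r ^ s))
    (hmass : μ E ≤ 1) (z : ℂ) :
    ∫ w, Real.log (1 / ‖z - w‖) ∂μ ≤
      ((μ E).toReal / s) * (1 + Real.log (1 / (μ E).toReal)) := by
  have hμuniv : μ Set.univ = μ E := by
    refine le_antisymm ?_ (measure_mono (Set.subset_univ _))
    rw [← Set.union_compl_self E]
    exact (measure_union_le _ _).trans (by simp [hsupp])
  have hμE_ne_top : μ E ≠ ⊤ := (hmass.trans_lt ENNReal.one_lt_top).ne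
  rcases eq_or_ne (μ E) 0 with h0 | h0
  · have hz : μ = 0 := by
      rw [← Measure.measure_univ_eq_zero, hμuniv, h0]
    rw [h0, hz]
    simp
  · set M := (μ E).toReal with hM
    have hMpos : 0 < M := ENNReal.toReal_pos h0 hμE_ne_top
    have hM1 : M ≤ 1 := by
      calc M ≤ (1 : ℝ≥0∞).toReal := ENNReal.toReal_mono ENNReal.one_ne_top hmass
      _ = 1 := by simp
    have hlog : 0 ≤ Real.log (1 / M) := Real.log_nonneg (one_le_one_div hMpos hM1)
    set τ : ℝ := Real.log (1 / M) / s with hτdef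
    have hτ : 0 ≤ τ := div_nonneg hlog hs.le
    set f : ℂ → ℝ := fun w => Real.log (1 / ‖z - w‖) with hf
    set g : ℂ → ℝ := fun w => max (f w) 0 with hg
    have hgm : Measurable g := by
      apply Measurable.max _ measurable_const
      exact Real.measurable_log.comp
        (measurable_const.div (continuous_norm.comp
          (continuous_const.sub continuous_id)).measurable)
    have hg_nn : ∀ w, 0 ≤ g w := fun w => le_max_right _ _
    -- key set inclusion
    have hsub : ∀ t : ℝ, 0 < t →
        {w : ℂ | t < g w} ⊆ Metric.closedBall z (Real.exp (-t)) := by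
      intro t ht w hw
      simp only [Set.mem_setOf_eq, hg, lt_max_iff] at hw
      have hfw : t < f w := by
        rcases hw with h | h
        · exact h
        · linarith
      have habs : 0 < ‖z - w‖ := by
        rcases eq_or_lt_of_le (norm_nonneg (z - w)) with h | h
        · exfalso
          rw [hf] at hfw
          simp only [← h, div_zero, Real.log_zero] at hfw
          linarith
        · exact h
      rw [hf] at hfw
      have hexp : Real.exp t < 1 / ‖z - w‖ :=
        (Real.lt_log_iff_exp_lt (by positivity)).mp hfw
      have h3 : ‖z - w‖ < Real.exp (-t) := by
        rw [Real.exp_neg]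
        rw [one_div] at hexp
        exact (lt_inv_comm₀ (Real.exp_pos t) habs).mp hexp
      rw [Metric.mem_closedBall, Complex.dist_eq, ← norm_neg, neg_sub]
      exact h3.le
    -- measure bounds
    have hbound1 : ∀ t : ℝ, μ {w : ℂ | t < g w} ≤ μ E := fun t =>
      hμuniv ▸ measure_mono (Set.subset_univ _)
    have hbound2 : ∀ t : ℝ, 0 < t →
        μ {w : ℂ | t < g w} ≤ ENNReal.ofReal (Real.exp (-s * t)) := by
      intro t ht
      refine (measure_mono (hsub t ht)).trans ((hgrowth z _ (Real.exp_pos _)).trans_eq ?_)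
      congr 1
      rw [← Real.exp_log (x := Real.exp (-t) ^ s) (by positivity), Real.log_rpow (Real.exp_pos _),
        Real.log_exp]
      ring_nf
    -- layer cake
    have hlayer : ∫⁻ w, ENNReal.ofReal (g w) ∂μ = ∫⁻ t in Set.Ioi (0:ℝ), μ {w : ℂ | t < g w} :=
      lintegral_eq_lintegral_meas_lt μ (Filter.Eventually.of_forall hg_nn) hgm.aemeasurable
    have hsplit : ∫⁻ t in Set.Ioi (0:ℝ), μ {w : ℂ | t < g w} =
        (∫⁻ t in Set.Ioc (0:ℝ) τ, μ {w : ℂ | t < g w}) +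
        (∫⁻ t in Set.Ioi τ, μ {w : ℂ | t < g w}) := by
      rw [← Set.Ioc_union_Ioi_eq_Ioi hτ,
        lintegral_union measurableSet_Ioi (Set.Ioc_disjoint_Ioi le_rfl)]
    have hp1 : (∫⁻ t in Set.Ioc (0:ℝ) τ, μ {w : ℂ | t < g w}) ≤
        ENNReal.ofReal (M * τ) := by
      calc (∫⁻ t in Set.Ioc (0:ℝ) τ, μ {w : ℂ | t < g w})
          ≤ ∫⁻ _ in Set.Ioc (0:ℝ) τ, μ E := setLIntegral_mono measurable_const
            (fun t _ => hbound1 t)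
        _ = μ E * ENNReal.ofReal τ := by
            rw [setLIntegral_const, Real.volume_Ioc, sub_zero]
        _ = ENNReal.ofReal (M * τ) := by
            rw [← ENNReal.ofReal_toReal hμE_ne_top, ← hM,
              ← ENNReal.ofReal_mul hMpos.le]
    have hp2 : (∫⁻ t in Set.Ioi τ, μ {w : ℂ | t < g w}) ≤ ENNReal.ofReal (M / s) := by
      have : (∫⁻ t in Set.Ioi τ, μ {w : ℂ | t < g w}) ≤
          ∫⁻ t in Set.Ioi τ, ENNReal.ofReal (Real.exp (-s * t)) := by
        refine setLIntegral_mono (by fun_prop) ?_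
        intro t ht
        exact hbound2 t (lt_of_le_of_lt hτ ht)
      refine this.trans_eq ?_
      rw [exp_lintegral_Ioi hs τ]
      congr 1
      have hexpτ : Real.exp (-s * τ) = M := by
        have : -s * τ = Real.log M := by
          rw [hτdef]
          field_simp
          rw [one_div, Real.log_inv]
          ring
        rw [this, Real.exp_log hMpos]
      rw [hexpτ]
    have hmain : ∫⁻ w, ENNReal.ofReal (g w) ∂μ ≤
        ENNReal.ofReal (M / s * (1 + Real.log (1 / M))) := by
      rw [hlayer, hsplit]
      calc _ ≤ ENNReal.ofReal (M * τ) + ENNReal.ofReal (M / s) := add_le_add hp1 hp2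
        _ = ENNReal.ofReal (M * τ + M / s) :=
            (ENNReal.ofReal_add (by positivity) (by positivity)).symm
        _ = ENNReal.ofReal (M / s * (1 + Real.log (1 / M))) := by
            congr 1
            rw [hτdef]
            ring
    have hRHS_nn : 0 ≤ M / s * (1 + Real.log (1 / M)) := by positivity
    by_cases hint : Integrable f μ
    · have h1 : ∫ w, f w ∂μ ≤ ∫ w, g w ∂μ :=
        integral_mono hint hint.pos_part (fun w => le_max_left _ _)
      have h2 : ∫ w, g w ∂μ = (∫⁻ w, ENNReal.ofReal (g w) ∂μ).toReal :=
        integral_eq_lintegral_of_nonneg_ae (Filter.Eventually.of_forall hg_nn)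
          hgm.aestronglyMeasurable
      have h3 : (∫⁻ w, ENNReal.ofReal (g w) ∂μ).toReal ≤
          M / s * (1 + Real.log (1 / M)) :=
        ENNReal.toReal_le_of_le_ofReal hRHS_nn hmain
      calc ∫ w, f w ∂μ ≤ ∫ w, g w ∂μ := h1
        _ ≤ M / s * (1 + Real.log (1 / M)) := h2 ▸ h3
    · rw [integral_undef hint]
      exact hRHS_nn
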